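/- Let q > 2 be a natural number. Among all quadruples (a,b,c,d) of integers with 0 ≤ a,b,c,d ≤ 2q−1, the number of quadruples satisfying a − b − c + d ≢ 0 (mod 2q) and (a mod q) − (b mod q) − (c mod q) + (d mod q) ≡ 0 (mod q) equals 8q³. Consequently, a uniformly random exponent chain that does not form a cycle for circulant size 2q forms a cycle after modulo lifting with probability 1/(2q−1). -/

import Mathlib

/-- The finite set of exponent chains of length 4 for circulant size `2q`:
quadruples `(a,b,c,d)` of integers with `0 ≤ a,b,c,d ≤ 2q-1`. -/
noncomputable abbrev expChains (q : ℕ) : Finset (ℤ × ℤ × ℤ × ℤ) :=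
  Finset.Icc (0:ℤ) (2 * q - 1) ×ˢ Finset.Icc (0:ℤ) (2 * q - 1) ×ˢ
    Finset.Icc (0:ℤ) (2 * q - 1) ×ˢ Finset.Icc (0:ℤ) (2 * q - 1)

/-- The chain forms a cycle for circulant size `2q`. -/
abbrev isCycle (q : ℕ) (x : ℤ × ℤ × ℤ × ℤ) : Prop :=
  (x.1 - x.2.1 - x.2.2.1 + x.2.2.2) % (2 * q) = 0

/-- The modulo-lifted chain (entries `e mod q`) forms a cycle for circulant size `q`. -/
abbrev isModCycle (q : ℕ) (x : ℤ × ℤ × ℤ × ℤ) : Prop :=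
  (x.1 % q - x.2.1 % q - x.2.2.1 % q + x.2.2.2 % q) % q = 0

lemma my_count1 (n : ℤ) (hn : 0 < n) (C : ℤ) :
    ((Finset.Icc 0 (n-1)).filter (fun d => (C + d) % n = 0)).card = 1 := by
  rw [Finset.card_eq_one]
  refine ⟨(-C) % n, ?_⟩
  ext d
  simp only [Finset.mem_filter, Finset.mem_Icc, Finset.mem_singleton]
  constructor
  · rintro ⟨⟨h0, h1⟩, h2⟩
    have hdvd : n ∣ (C + d) := Int.dvd_of_emod_eq_zero h2
    have heq : d % n = (-C) % n := by
      rw [Int.emod_eq_emod_iff_emod_sub_eq_zero]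
      have : d - (-C) = C + d := by ring
      rw [this]
      exact Int.emod_eq_zero_of_dvd hdvd
    have : d % n = d := Int.emod_eq_of_lt h0 (by omega)
    omega
  · rintro rfl
    refine ⟨⟨Int.emod_nonneg _ (by omega), by have := Int.emod_lt_of_pos (-C) hn; omega⟩, ?_⟩
    have : (C + (-C) % n) % n = (C % n + (-C) % n % n) % n := by rw [Int.add_emod]
    rw [this, Int.emod_emod_of_dvd _ dvd_rfl, ← Int.add_emod]
    simp

lemma my_prod_count (n : ℤ) (hn : 0 < n) (g : ℤ → ℤ → ℤ → ℤ) :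
    ((Finset.Icc (0:ℤ) (n-1) ×ˢ Finset.Icc (0:ℤ) (n-1) ×ˢ Finset.Icc (0:ℤ) (n-1) ×ˢ
        Finset.Icc (0:ℤ) (n-1)).filter
      (fun x => (g x.1 x.2.1 x.2.2.1 + x.2.2.2) % n = 0)).card = n.toNat ^ 3 := by
  rw [Finset.card_filter]
  simp only [Finset.sum_product]
  have key : ∀ a b c : ℤ,
      (∑ d ∈ Finset.Icc (0:ℤ) (n-1), if (g a b c + d) % n = 0 then 1 else 0) = 1 := by
    intro a b c
    rw [← Finset.card_filter, my_count1 n hn]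
  simp only [key, Finset.sum_const, smul_eq_mul, mul_one, Int.card_Icc]
  have : (n - 1 + 1 - 0).toNat = n.toNat := by omega
  rw [this]; ring

lemma my_mod_equiv (q s : ℤ) (hq : 0 < q) :
    (¬ s % (2*q) = 0 ∧ s % q = 0) ↔ (s - q) % (2*q) = 0 := by
  constructor
  · rintro ⟨h1, h2⟩
    obtain ⟨t, rfl⟩ := Int.dvd_of_emod_eq_zero h2
    have h2t : ¬ (2*q ∣ q*t) := fun h => h1 (Int.emod_eq_zero_of_dvd h)
    have ht : ¬ (2 ∣ t) := by
      rintro ⟨u, rfl⟩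
      exact h2t ⟨u, by ring⟩
    have : 2 ∣ (t - 1) := by omega
    obtain ⟨u, hu⟩ := this
    apply Int.emod_eq_zero_of_dvd
    exact ⟨u, by rw [show q*t - q = q*(t-1) by ring, hu]; ring⟩
  · intro h
    obtain ⟨u, hu⟩ := Int.dvd_of_emod_eq_zero h
    have hs : s = 2*q*u + q := by linarith
    subst hs
    constructor
    · intro hc
      have hd : (2*q) ∣ (2*q*u + q) := Int.dvd_of_emod_eq_zero hc
      have : (2*q) ∣ q := (dvd_add_right ⟨u, by ring⟩).mp hd
      have := Int.le_of_dvd hq this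
      omega
    · exact Int.emod_eq_zero_of_dvd ⟨2*u+1, by ring⟩

theorem stmt_3 (q : ℕ) (hq : 2 < q) :
    ((expChains q).filter (fun x => ¬ isCycle q x ∧ isModCycle q x)).card = 8 * q ^ 3 ∧
    (((expChains q).filter (fun x => ¬ isCycle q x ∧ isModCycle q x)).card : ℚ) /
      (((expChains q).filter (fun x => ¬ isCycle q x)).card : ℚ) = 1 / (2 * q - 1) := by
  have hq0 : (0:ℤ) < q := by omega
  have hn0 : (0:ℤ) < 2 * q := by omega
  have htn : ((2 * (q:ℤ)).toNat) = 2 * q := by omega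
  -- rewrite the filter for ¬cycle ∧ modcycle
  have hfilt : (expChains q).filter (fun x => ¬ isCycle q x ∧ isModCycle q x)
      = (expChains q).filter
          (fun x => ((x.1 - x.2.1 - x.2.2.1 - (q:ℤ)) + x.2.2.2) % (2 * (q:ℤ)) = 0) := by
    apply Finset.filter_congr
    intro x _
    have hmc : isModCycle q x ↔ (x.1 - x.2.1 - x.2.2.1 + x.2.2.2) % (q:ℤ) = 0 := by
      unfold isModCycle
      constructor <;> intro h
      · rw [← h]
        have h1 : x.1 % (q:ℤ) % q = x.1 % q := Int.emod_emod_of_dvd _ dvd_rfl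
        have h2 : x.2.1 % (q:ℤ) % q = x.2.1 % q := Int.emod_emod_of_dvd _ dvd_rfl
        have h3 : x.2.2.1 % (q:ℤ) % q = x.2.2.1 % q := Int.emod_emod_of_dvd _ dvd_rfl
        have h4 : x.2.2.2 % (q:ℤ) % q = x.2.2.2 % q := Int.emod_emod_of_dvd _ dvd_rfl
        exact (((Int.ModEq.sub h1 h2).sub h3).add h4).symm
      · rw [← h]
        have h1 : x.1 % (q:ℤ) % q = x.1 % q := Int.emod_emod_of_dvd _ dvd_rfl
        have h2 : x.2.1 % (q:ℤ) % q = x.2.1 % q := Int.emod_emod_of_dvd _ dvd_rfl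
        have h3 : x.2.2.1 % (q:ℤ) % q = x.2.2.1 % q := Int.emod_emod_of_dvd _ dvd_rfl
        have h4 : x.2.2.2 % (q:ℤ) % q = x.2.2.2 % q := Int.emod_emod_of_dvd _ dvd_rfl
        exact ((Int.ModEq.sub h1 h2).sub h3).add h4
    have := my_mod_equiv (q:ℤ) (x.1 - x.2.1 - x.2.2.1 + x.2.2.2) hq0
    rw [show x.1 - x.2.1 - x.2.2.1 + x.2.2.2 - (q:ℤ)
        = (x.1 - x.2.1 - x.2.2.1 - q) + x.2.2.2 by ring] at this
    simp only [hmc]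
    exact this
  have hcard1 : ((expChains q).filter (fun x => ¬ isCycle q x ∧ isModCycle q x)).card
      = 8 * q ^ 3 := by
    rw [hfilt]
    have := my_prod_count (2 * (q:ℤ)) hn0 (fun a b c => a - b - c - q)
    rw [this, htn]
    ring
  refine ⟨hcard1, ?_⟩
  -- count of cycles
  have hcyc : ((expChains q).filter (fun x => isCycle q x)).card = (2*q) ^ 3 := by
    have := my_prod_count (2 * (q:ℤ)) hn0 (fun a b c => a - b - c)
    rw [← htn]
    exact this
  have htot : (expChains q).card = (2*q) ^ 4 := by
    simp only [expChains, Finset.card_product, Int.card_Icc]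
    have : (2 * (q:ℤ) - 1 + 1 - 0).toNat = 2 * q := by omega
    rw [this]; ring
  have hnot : ((expChains q).filter (fun x => ¬ isCycle q x)).card
      = (2*q) ^ 4 - (2*q) ^ 3 := by
    have h := Finset.card_filter_add_card_filter_not
      (s := expChains q) (p := fun x => isCycle q x)
    omega
  rw [hcard1, hnot]
  have hle : (2*q) ^ 3 ≤ (2*q) ^ 4 := Nat.pow_le_pow_right (by omega) (by omega)
  have hq3 : (3:ℚ) ≤ (q:ℚ) := by exact_mod_cast hq
  rw [Nat.cast_sub hle]
  push_cast
  have hpos : (0:ℚ) < (2 * (q:ℚ)) ^ 4 - (2 * (q:ℚ)) ^ 3 := by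
    nlinarith [mul_le_mul_of_nonneg_right hq3 (by positivity : (0:ℚ) ≤ (q:ℚ)^3),
      pow_pos (show (0:ℚ) < (q:ℚ) by linarith) 3]
  rw [div_eq_div_iff (by linarith) (by linarith)]
  ring
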